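/- arXiv:1608.04146 — 3 statements merged into one kernel-verified Lean document; each statement's English description precedes it below -/
import Mathlib

section
/- Kronecker's theorem: an algebraic integer α ≠ 0 has house exactly 1 (all its Galois conjugates lie on the unit circle) if and only if α is a root of unity. -/
/-- The *house* of an algebraic number `α : ℂ`: the maximum of the absolute values of
the complex roots of the minimal polynomial of `α` over `ℚ` (the Galois conjugates). -/
noncomputable def house (α : ℂ) : ℝ :=
  sSup ((fun z : ℂ => ‖z‖) '' (minpoly ℚ α).rootSet ℂ)

open IntermediateField Polynomial in
/-- Kronecker's theorem: a nonzero algebraic integer has house exactly `1`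
if and only if it is a root of unity. -/
theorem kronecker (α : ℂ) (hint : IsIntegral ℤ α) (hα : α ≠ 0) :
    house α = 1 ↔ ∃ n : ℕ, 0 < n ∧ α ^ n = 1 := by
  have hQ : IsIntegral ℚ α := hint.tower_top
  have hne : (minpoly ℚ α) ≠ 0 := minpoly.ne_zero hQ
  have hαroot : α ∈ (minpoly ℚ α).rootSet ℂ :=
    Polynomial.mem_rootSet.2 ⟨hne, minpoly.aeval ℚ α⟩
  have hSne : ((fun z : ℂ => ‖z‖) '' (minpoly ℚ α).rootSet ℂ).Nonempty :=
    ⟨‖α‖, α, hαroot, rfl⟩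
  constructor
  · intro h
    -- set up the number field ℚ⟮α⟯
    haveI : FiniteDimensional ℚ ℚ⟮α⟯ := IntermediateField.adjoin.finiteDimensional hQ
    set K := ℚ⟮α⟯
    haveI : NumberField K := ⟨⟩
    set x : K := AdjoinSimple.gen ℚ α with hx
    have hxα : (algebraMap K ℂ) x = α := IntermediateField.AdjoinSimple.algebraMap_gen ℚ α
    have hxi : IsIntegral ℤ x := by
      rw [← isIntegral_algebraMap_iff (algebraMap K ℂ).injective, hxα]; exact hint
    have hbdd : BddAbove ((fun z : ℂ => ‖z‖) '' (minpoly ℚ α).rootSet ℂ) :=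
      (((minpoly ℚ α).rootSet_finite ℂ).image _).bddAbove
    have hle : ∀ φ : K →+* ℂ, ‖φ x‖ ≤ 1 := by
      intro φ
      have hφ : φ x ∈ (minpoly ℚ α).rootSet ℂ := by
        rw [show minpoly ℚ α = minpoly ℚ x from (IntermediateField.minpoly_gen ℚ α).symm,
          ← NumberField.Embeddings.range_eval_eq_rootSet_minpoly K ℂ x]
        exact ⟨φ, rfl⟩
      have hle' := le_csSup hbdd ⟨φ x, hφ, rfl⟩
      rw [show sSup ((fun z : ℂ => ‖z‖) '' (minpoly ℚ α).rootSet ℂ) = house α from rfl, h] at hle'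
      exact hle'
    -- finiteness argument: powers of x all have conjugates of norm ≤ 1
    obtain ⟨a, -, b, -, habne, hab⟩ :=
      Set.infinite_univ.exists_ne_map_eq_of_mapsTo
        (f := (x ^ · : ℕ → K))
        (t := {y : K | IsIntegral ℤ y ∧ ∀ φ : K →+* ℂ, ‖φ y‖ ≤ 1})
        (fun a _ => ⟨hxi.pow a, fun φ => by
          simpa [map_pow] using pow_le_one₀ (norm_nonneg _) (hle φ)⟩)
        (NumberField.Embeddings.finite_of_norm_le K ℂ (1 : ℝ))
    have hx0 : x ≠ 0 := by
      intro h0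
      apply hα
      rw [← hxα, h0, map_zero]
    rcases habne.lt_or_gt with hlt | hlt
    · refine ⟨b - a, Nat.sub_pos_of_lt hlt, ?_⟩
      have : x ^ (b - a) = 1 := by
        have := hab.symm
        rw [← Nat.sub_add_cancel hlt.le, pow_add, mul_left_eq_self₀] at this
        exact this.resolve_right (pow_ne_zero _ hx0)
      calc α ^ (b - a) = (algebraMap K ℂ) (x ^ (b - a)) := by rw [map_pow, hxα]
        _ = 1 := by rw [this, map_one]
    · refine ⟨a - b, Nat.sub_pos_of_lt hlt, ?_⟩
      have : x ^ (a - b) = 1 := by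
        have := hab
        rw [← Nat.sub_add_cancel hlt.le, pow_add, mul_left_eq_self₀] at this
        exact this.resolve_right (pow_ne_zero _ hx0)
      calc α ^ (a - b) = (algebraMap K ℂ) (x ^ (a - b)) := by rw [map_pow, hxα]
        _ = 1 := by rw [this, map_one]
  · rintro ⟨n, hn, hαn⟩
    have habs : ∀ β ∈ (minpoly ℚ α).rootSet ℂ, ‖β‖ = 1 := by
      intro β hβ
      have hdvd : minpoly ℚ α ∣ X ^ n - 1 := by
        apply minpoly.dvd
        simp [hαn]
      have hβn : β ^ n = 1 := by
        have := Polynomial.aeval_eq_zero_of_dvd_aeval_eq_zero hdvd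
          ((Polynomial.mem_rootSet.1 hβ).2)
        simpa [sub_eq_zero] using this
      exact Complex.norm_eq_one_of_pow_eq_one hβn hn.ne'
    have : (fun z : ℂ => ‖z‖) '' (minpoly ℚ α).rootSet ℂ = {1} := by
      apply Set.eq_singleton_iff_nonempty_unique_mem.2
      exact ⟨hSne, by rintro _ ⟨β, hβ, rfl⟩; exact habs β hβ⟩
    rw [house, this, csSup_singleton]
end

section
/- Let k be a number field and h = p/q ∈ k(x) with deg p > deg q + 1. Then there exists a nonzero integer D, depending only on h, such that for every algebraic number α and every n ≥ 1, if h^n(α) is an algebraic integer then D·h^j(α) is an algebraic integer for every j with 0 ≤ j ≤ n − 1. -/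
open IsDedekindDomain IsDedekindDomain.HeightOneSpectrum Polynomial

theorem dvd_of_intValuation_le {R : Type*} [CommRing R] [IsDedekindDomain R]
    {a b : R} (ha : a ≠ 0) (hb : b ≠ 0)
    (h : ∀ v : HeightOneSpectrum R, v.intValuationDef a ≤ v.intValuationDef b) : b ∣ a := by
  classical
  have hA : Associates.mk (Ideal.span {a} : Ideal R) ≠ 0 := by
    simp [Associates.mk_ne_zero, Ideal.span_singleton_eq_bot, ha]
  have hB : Associates.mk (Ideal.span {b} : Ideal R) ≠ 0 := by
    simp [Associates.mk_ne_zero, Ideal.span_singleton_eq_bot, hb]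
  -- count inequality for each height one prime
  have hcount : ∀ v : HeightOneSpectrum R,
      (Associates.mk v.asIdeal).count (Associates.mk (Ideal.span {b} : Ideal R)).factors ≤
      (Associates.mk v.asIdeal).count (Associates.mk (Ideal.span {a} : Ideal R)).factors := by
    intro v
    have := h v
    rw [v.intValuationDef_if_neg ha, v.intValuationDef_if_neg hb] at this
    have := (WithZero.coe_le_coe.mp this)
    have := Multiplicative.toAdd_le.mpr this
    simpa using this
  have hle : @LE.le _ Associates.instPreorder.toLE (Associates.mk (Ideal.span {b} : Ideal R)) (Associates.mk (Ideal.span {a} : Ideal R)) := by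
    rw [← Associates.factors_le]
    obtain ⟨sa, hsa⟩ := Associates.factors_eq_some_iff_ne_zero.mpr hA
    obtain ⟨sb, hsb⟩ := Associates.factors_eq_some_iff_ne_zero.mpr hB
    rw [hsa, hsb, WithTop.coe_le_coe, Multiset.le_iff_count]
    rintro ⟨p, hp⟩
    -- p is an irreducible ideal, hence prime, hence a height one prime
    obtain ⟨J, rfl⟩ := Associates.mk_surjective p
    have hJp : Prime J := UniqueFactorizationMonoid.irreducible_iff_prime.mp
      (Associates.irreducible_mk.mp hp)
    have hJbot : J ≠ ⊥ := hJp.ne_zero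
    have hJprime : J.IsPrime := Ideal.isPrime_of_prime hJp
    set v : HeightOneSpectrum R := ⟨J, hJprime, hJbot⟩
    have := hcount v
    rw [show v.asIdeal = J from rfl] at this
    rw [hsa, hsb] at this
    rwa [Associates.count_some hp, Associates.count_some hp] at this
  rw [Associates.mk_le_mk_iff_dvd] at hle
  have : Ideal.span {a} ≤ Ideal.span {b} := Ideal.le_of_dvd hle
  exact Ideal.span_singleton_le_span_singleton.mp this

theorem exists_algebraMap_eq_of_forall_valuation_le_one
    {R : Type*} [CommRing R] [IsDedekindDomain R] {K : Type*} [Field K] [Algebra R K]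
    [IsFractionRing R K] {x : K} (h : ∀ v : HeightOneSpectrum R, v.valuation K x ≤ 1) :
    ∃ r : R, algebraMap R K r = x := by
  obtain ⟨a, b, hb, rfl⟩ := IsFractionRing.div_surjective (A := R) x
  have hb0 : b ≠ 0 := nonZeroDivisors.ne_zero hb
  rcases eq_or_ne a 0 with rfl | ha
  · exact ⟨0, by simp⟩
  have hbK : algebraMap R K b ≠ 0 := by
    simpa using (IsFractionRing.to_map_eq_zero_iff (K := K)).not.mpr hb0
  have key : ∀ v : HeightOneSpectrum R, v.intValuationDef a ≤ v.intValuationDef b := by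
    intro v
    have := h v
    rw [Valuation.map_div] at this
    rw [valuation_of_algebraMap, valuation_of_algebraMap] at this
    have hvb : v.intValuation b ≠ 0 := v.intValuation_ne_zero b hb0
    rw [div_le_one₀ (zero_lt_iff.mpr hvb)] at this
    exact this
  obtain ⟨c, rfl⟩ := dvd_of_intValuation_le ha hb0 key
  refine ⟨c, ?_⟩
  rw [map_mul, mul_comm, mul_div_assoc, div_self hbK, mul_one]

open IsDedekindDomain IsDedekindDomain.HeightOneSpectrum Polynomial

section Step
variable {R : Type*} [CommRing R] [IsDedekindDomain R] {L : Type*} [Field L] [Algebra R L]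
  [IsFractionRing R L] (v : HeightOneSpectrum R)

theorem valuation_eval_le {Q : L[X]} (hQ : ∀ i, v.valuation L (Q.coeff i) ≤ 1)
    {β : L} (hβ : 1 ≤ v.valuation L β) :
    v.valuation L (Q.eval β) ≤ v.valuation L β ^ Q.natDegree := by
  rw [eval_eq_sum_range]
  apply Valuation.map_sum_le
  intro i hi
  rw [Finset.mem_range, Nat.lt_succ_iff] at hi
  rw [Valuation.map_mul, Valuation.map_pow]
  calc v.valuation L (Q.coeff i) * v.valuation L β ^ i
      ≤ 1 * v.valuation L β ^ i := mul_le_mul_left (hQ i) _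
    _ = v.valuation L β ^ i := one_mul _
    _ ≤ v.valuation L β ^ Q.natDegree := pow_le_pow_right₀ hβ hi

theorem valuation_step {P Q : L[X]}
    (hP : ∀ i, v.valuation L (P.coeff i) ≤ 1) (hQc : ∀ i, v.valuation L (Q.coeff i) ≤ 1)
    (hdeg : Q.natDegree + 1 < P.natDegree) {β : L} (hQβ : Q.eval β ≠ 0)
    (hbig : 1 < v.valuation L (P.leadingCoeff * β)) :
    v.valuation L (P.leadingCoeff * β) < v.valuation L (P.leadingCoeff * (P.eval β / Q.eval β)) := by
  set V : Valuation L (WithZero (Multiplicative ℤ)) := v.valuation L with hV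
  set a := P.leadingCoeff with ha
  set d := P.natDegree with hd
  have hd1 : 1 ≤ d := le_trans (Nat.le_add_left 1 _) hdeg.le
  have hVa : V a ≤ 1 := hP d
  have hbig' : 1 < V a * V β := by rwa [← Valuation.map_mul]
  have hVβ1 : 1 < V β := lt_of_lt_of_le hbig' (by
    calc V a * V β ≤ 1 * V β := mul_le_mul_left hVa _
      _ = V β := one_mul _)
  have hVβ0 : V β ≠ 0 := fun h => by simp [h] at hVβ1
  have hVa0 : V a ≠ 0 := fun h => by simp [h] at hbig'
  -- valuation of P.eval β
  have herase : ∀ i, V (P.eraseLead.coeff i) ≤ 1 := by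
    intro i
    rw [eraseLead_coeff]
    split
    · simp
    · exact hP i
  have h1 : V (P.eraseLead.eval β) ≤ V β ^ (d - 1) := by
    refine le_trans (valuation_eval_le v herase hVβ1.le) ?_
    exact pow_le_pow_right₀ hVβ1.le (le_trans (eraseLead_natDegree_le P) (by omega))
  have h2 : V β ^ (d - 1) < V (a * β ^ d) := by
    rw [Valuation.map_mul, Valuation.map_pow]
    have : V β ^ d = V β * V β ^ (d - 1) := by
      rw [← pow_succ']
      congr 1
      omega
    rw [this, ← mul_assoc]
    calc V β ^ (d-1) = 1 * V β ^ (d-1) := (one_mul _).symm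
      _ < (V a * V β) * V β ^ (d-1) := by
          have := mul_lt_mul_of_pos_left hbig' (zero_lt_iff.mpr (pow_ne_zero (d-1) hVβ0))
          rw [mul_comm (V β ^ (d-1)) (V a * V β), mul_one] at this
          rwa [one_mul]
  have hPβ : V (P.eval β) = V a * V β ^ d := by
    conv_lhs => rw [← eraseLead_add_C_mul_X_pow P]
    rw [eval_add, eval_mul, eval_C, eval_pow, eval_X]
    rw [Valuation.map_add_eq_of_lt_right _ (lt_of_le_of_lt h1 h2)]
    rw [Valuation.map_mul, Valuation.map_pow]
  have hQβle : V (Q.eval β) ≤ V β ^ Q.natDegree := valuation_eval_le v hQc hVβ1.le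
  have hQβ0 : V (Q.eval β) ≠ 0 := fun h => hQβ ((Valuation.zero_iff _).mp h)
  -- key identity
  have hid : V (a * (P.eval β / Q.eval β)) * V (Q.eval β) = V a * V (P.eval β) := by
    rw [← Valuation.map_mul, ← Valuation.map_mul]
    congr 1
    field_simp
  by_contra hcon
  push_neg at hcon
  rw [show V (a * β) = V a * V β from Valuation.map_mul _ a β] at hcon
  have hfinal : V a * (V a * V β ^ d) ≤ (V a * V β) * V β ^ Q.natDegree := by
    rw [← hPβ, ← hid]
    exact mul_le_mul' hcon hQβle
  rw [mul_assoc] at hfinal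
  have hcancel : V a * V β ^ d ≤ V β ^ (Q.natDegree + 1) := by
    have := le_of_mul_le_mul_left hfinal (zero_lt_iff.mpr hVa0)
    rwa [← pow_succ'] at this
  have hgt : V β ^ (Q.natDegree + 1) < V a * V β ^ d := by
    have hsplit : V β ^ d = V β * V β ^ (d - 1) := by
      rw [← pow_succ']; congr 1; omega
    rw [hsplit, ← mul_assoc]
    calc V β ^ (Q.natDegree + 1) ≤ V β ^ (d - 1) := pow_le_pow_right₀ hVβ1.le (by omega)
      _ = 1 * V β ^ (d-1) := (one_mul _).symm
      _ < (V a * V β) * V β ^ (d-1) := by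
          have := mul_lt_mul_of_pos_left hbig' (zero_lt_iff.mpr (pow_ne_zero (d-1) hVβ0))
          rw [mul_comm (V β ^ (d-1)) (V a * V β), mul_one] at this
          rwa [one_mul]
  exact absurd hcancel (not_le.mpr hgt)

end Step

open Polynomial

theorem exists_int_multiple_integral (s : Finset ℂ) (hs : ∀ x ∈ s, IsAlgebraic ℚ x) :
    ∃ A : ℤ, A ≠ 0 ∧ ∀ x ∈ s, IsIntegral ℤ ((A : ℂ) * x) := by
  classical
  induction s using Finset.induction with
  | empty => exact ⟨1, one_ne_zero, by simp⟩
  | @insert a s ha ih =>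
    obtain ⟨A, hA, h⟩ := ih (fun x hx => hs x (Finset.mem_insert_of_mem hx))
    have halg : IsAlgebraic ℤ a :=
      (IsFractionRing.isAlgebraic_iff ℤ ℚ ℂ).mpr (hs a (Finset.mem_insert_self a s))
    obtain ⟨y, hy, hyint⟩ := halg.exists_integral_multiple
    refine ⟨A * y, mul_ne_zero hA hy, fun x hx => ?_⟩
    rcases Finset.mem_insert.mp hx with rfl | hx
    · have : ((A * y : ℤ) : ℂ) * x = (A : ℂ) * ((y : ℂ) * x) := by push_cast; ring
      rw [this]
      have h1 : IsIntegral ℤ ((y : ℂ) * x) := by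
        simpa [zsmul_eq_mul] using hyint
      have h2 : IsIntegral ℤ ((algebraMap ℤ ℂ A) * ((y:ℂ) * x)) := isIntegral_algebraMap.mul h1
      simpa using h2
    · have : ((A * y : ℤ) : ℂ) * x = (y : ℂ) * ((A : ℂ) * x) := by push_cast; ring
      rw [this]
      have h2 : IsIntegral ℤ ((algebraMap ℤ ℂ y) * ((A:ℂ) * x)) := isIntegral_algebraMap.mul (h x hx)
      simpa using h2

theorem exists_int_eq_mul_integral {x : ℂ} (hx : IsIntegral ℤ x) (h0 : x ≠ 0) :
    ∃ (D : ℤ) (e : ℂ), D ≠ 0 ∧ IsIntegral ℤ e ∧ (D : ℂ) = x * e := by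
  set μ := minpoly ℤ x with hμ
  have hnd : 0 < μ.natDegree := minpoly.natDegree_pos hx
  have hμ0 : μ ≠ 0 := minpoly.ne_zero hx
  have hkey : aeval x μ.divX * x + ((μ.coeff 0 : ℤ) : ℂ) = 0 := by
    have : aeval x μ = 0 := minpoly.aeval ℤ x
    conv_lhs at this => rw [← divX_mul_X_add μ]
    rw [map_add, map_mul, aeval_X, aeval_C] at this
    simpa using this
  have hDne : μ.coeff 0 ≠ 0 := by
    intro hc
    rw [hc] at hkey
    push_cast at hkey
    rw [add_zero, mul_eq_zero] at hkey
    rcases hkey with hkey | hkey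
    · -- divX μ is monic and annihilates x, contradicting minimality
      have hmonic : μ.divX.Monic := by
        have hlc : μ.divX.coeff (μ.divX.natDegree) = 1 := by
          rw [natDegree_divX_eq_natDegree_tsub_one, coeff_divX]
          have : μ.natDegree - 1 + 1 = μ.natDegree := by omega
          rw [this]
          exact minpoly.monic hx
        rwa [Monic, leadingCoeff]
      have := minpoly.min ℤ x hmonic hkey
      exact absurd this (not_le.mpr (degree_divX_lt hμ0))
    · exact h0 hkey
  refine ⟨μ.coeff 0, -(aeval x μ.divX), hDne, ?_, ?_⟩
  · apply IsIntegral.neg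
    have : aeval x μ.divX = ((aeval (⟨x, hx⟩ : integralClosure ℤ ℂ) μ.divX : integralClosure ℤ ℂ) : ℂ) := by
      exact (Polynomial.aeval_subalgebra_coe μ.divX (integralClosure ℤ ℂ) ⟨x, hx⟩).symm
    rw [this]
    exact (aeval (⟨x, hx⟩ : integralClosure ℤ ℂ) μ.divX).2
  · have := hkey
    rw [mul_comm, ← neg_eq_iff_add_eq_zero] at this
    rw [← this]
    ring


open Polynomial IsDedekindDomain IsDedekindDomain.HeightOneSpectrum NumberField


/-- The map `x ↦ P(x)/Q(x)` on `ℂ` given by a pair of polynomials. -/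
noncomputable def ratMap (P Q : Polynomial ℂ) : ℂ → ℂ := fun x => P.eval x / Q.eval x

/-- Let `h = p/q` over a number field `K` (embedded in `ℂ` via `f`) with
`deg p > deg q + 1`.  Then there is a nonzero integer `D`, depending only on `h`,
such that whenever `hⁿ(α)` is an algebraic integer (all iterates being defined at `α`),
`D·hʲ(α)` is an algebraic integer for all `0 ≤ j ≤ n - 1`. -/
theorem denominator_bound_for_iterates {K : Type*} [Field K] [NumberField K]
    (f : K →+* ℂ) (p q : Polynomial K) (hq : q ≠ 0)
    (hdeg : q.natDegree + 1 < p.natDegree) :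
    ∃ D : ℤ, D ≠ 0 ∧
      ∀ (α : ℂ), IsAlgebraic ℚ α → ∀ n : ℕ, 1 ≤ n →
        (∀ j < n, (q.map f).eval ((ratMap (p.map f) (q.map f))^[j] α) ≠ 0) →
        IsIntegral ℤ ((ratMap (p.map f) (q.map f))^[n] α) →
        ∀ j < n, IsIntegral ℤ ((D : ℂ) * (ratMap (p.map f) (q.map f))^[j] α) := by
  classical
  have hfinj : Function.Injective f := f.injective
  set pf := p.map f with hpf
  set qf := q.map f with hqf
  have hpfdeg : pf.natDegree = p.natDegree := natDegree_map_eq_of_injective hfinj p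
  have hqfdeg : qf.natDegree = q.natDegree := natDegree_map_eq_of_injective hfinj q
  have hp0 : p ≠ 0 := fun h => by simp [h] at hdeg
  have hpf0 : pf ≠ 0 := (Polynomial.map_ne_zero_iff hfinj).mpr hp0
  have hqf0 : qf ≠ 0 := (Polynomial.map_ne_zero_iff hfinj).mpr hq
  -- the finite set of coefficients
  set s : Finset ℂ := (Finset.range (pf.natDegree + 1)).image pf.coeff ∪
      (Finset.range (qf.natDegree + 1)).image qf.coeff with hs
  have hs_alg : ∀ x ∈ s, IsAlgebraic ℚ x := by
    intro x hx
    rw [hs, Finset.mem_union] at hx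
    have : ∃ c : K, f c = x := by
      rcases hx with hx | hx <;>
      · obtain ⟨i, -, rfl⟩ := Finset.mem_image.mp hx
        exact ⟨_, (coeff_map f i).symm⟩
    obtain ⟨c, rfl⟩ := this
    exact IsAlgebraic.algHom f.toRatAlgHom (Algebra.IsAlgebraic.isAlgebraic c)
  -- clear denominators
  obtain ⟨A, hA0, hAint⟩ := exists_int_multiple_integral s hs_alg
  have hApf : ∀ i, IsIntegral ℤ ((A : ℂ) * pf.coeff i) := by
    intro i
    by_cases hi : i ≤ pf.natDegree
    · exact hAint _ (Finset.mem_union_left _ (Finset.mem_image.mpr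
        ⟨i, Finset.mem_range.mpr (by omega), rfl⟩))
    · rw [coeff_eq_zero_of_natDegree_lt (by omega), mul_zero]
      exact isIntegral_zero
  have hAqf : ∀ i, IsIntegral ℤ ((A : ℂ) * qf.coeff i) := by
    intro i
    by_cases hi : i ≤ qf.natDegree
    · exact hAint _ (Finset.mem_union_right _ (Finset.mem_image.mpr
        ⟨i, Finset.mem_range.mpr (by omega), rfl⟩))
    · rw [coeff_eq_zero_of_natDegree_lt (by omega), mul_zero]
      exact isIntegral_zero
  -- the scaled leading coefficient and the integer D
  set aA : ℂ := (A : ℂ) * pf.leadingCoeff with haA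
  have haA0 : aA ≠ 0 := mul_ne_zero (Int.cast_ne_zero.mpr hA0)
    (leadingCoeff_ne_zero.mpr hpf0)
  have haAint : IsIntegral ℤ aA := hApf pf.natDegree
  obtain ⟨D, e, hD0, heint, hDe⟩ := exists_int_eq_mul_integral haAint haA0
  refine ⟨D, hD0, ?_⟩
  intro α halg n hn hzero hint j hjn
  -- the number field L
  set S : Set ℂ := insert α ↑s with hS
  haveI : Finite ↥S := ((Finset.finite_toSet s).insert α).to_subtype
  have hSint : ∀ x ∈ S, IsIntegral ℚ x := by
    intro x hx
    rcases Set.mem_insert_iff.mp hx with rfl | hx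
    · exact halg.isIntegral
    · exact (hs_alg x hx).isIntegral
  set L : IntermediateField ℚ ℂ := IntermediateField.adjoin ℚ S with hL
  haveI : FiniteDimensional ℚ ↥L := IntermediateField.finiteDimensional_adjoin hSint
  haveI : NumberField ↥L := ⟨⟩
  have hmemS : ∀ x ∈ S, x ∈ L := fun x hx => IntermediateField.subset_adjoin ℚ S hx
  have hαL : α ∈ L := hmemS α (Set.mem_insert _ _)
  have hcoeffP : ∀ i, pf.coeff i ∈ L := by
    intro i
    by_cases hi : i ≤ pf.natDegree
    · exact hmemS _ (Set.mem_insert_of_mem _ (Finset.mem_coe.mpr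
        (Finset.mem_union_left _ (Finset.mem_image.mpr
          ⟨i, Finset.mem_range.mpr (by omega), rfl⟩))))
    · rw [coeff_eq_zero_of_natDegree_lt (by omega)]; exact zero_mem L
  have hcoeffQ : ∀ i, qf.coeff i ∈ L := by
    intro i
    by_cases hi : i ≤ qf.natDegree
    · exact hmemS _ (Set.mem_insert_of_mem _ (Finset.mem_coe.mpr
        (Finset.mem_union_right _ (Finset.mem_image.mpr
          ⟨i, Finset.mem_range.mpr (by omega), rfl⟩))))
    · rw [coeff_eq_zero_of_natDegree_lt (by omega)]; exact zero_mem L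
  -- lift the polynomials to L
  obtain ⟨PL, hPL⟩ := (Polynomial.mem_lifts pf).mp ((lifts_iff_coeff_lifts (f := algebraMap ↥L ℂ) pf).mpr
    (fun i => ⟨⟨pf.coeff i, hcoeffP i⟩, rfl⟩))
  obtain ⟨QL, hQL⟩ := (Polynomial.mem_lifts qf).mp ((lifts_iff_coeff_lifts (f := algebraMap ↥L ℂ) qf).mpr
    (fun i => ⟨⟨qf.coeff i, hcoeffQ i⟩, rfl⟩))
  have hLinj : Function.Injective (algebraMap ↥L ℂ) := (algebraMap ↥L ℂ).injective
  have hPLdeg : PL.natDegree = pf.natDegree := by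
    rw [← hPL]; exact (natDegree_map_eq_of_injective hLinj PL).symm
  have hQLdeg : QL.natDegree = qf.natDegree := by
    rw [← hQL]; exact (natDegree_map_eq_of_injective hLinj QL).symm
  have hevalP : ∀ y : ↥L, pf.eval (y : ℂ) = ((PL.eval y : ↥L) : ℂ) := by
    intro y
    conv_lhs => rw [← hPL]
    rw [← IntermediateField.algebraMap_apply, ← IntermediateField.algebraMap_apply, eval_map,
      eval₂_hom]
  have hevalQ : ∀ y : ↥L, qf.eval (y : ℂ) = ((QL.eval y : ↥L) : ℂ) := by
    intro y
    conv_lhs => rw [← hQL]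
    rw [← IntermediateField.algebraMap_apply, ← IntermediateField.algebraMap_apply, eval_map,
      eval₂_hom]
  -- the orbit inside L
  set Lβ : ℕ → ↥L := fun j => Nat.rec (⟨α, hαL⟩ : ↥L)
    (fun _ y => PL.eval y / QL.eval y) j with hLβ
  have hLβ0 : Lβ 0 = ⟨α, hαL⟩ := rfl
  have hLβsucc : ∀ k, Lβ (k + 1) = PL.eval (Lβ k) / QL.eval (Lβ k) := fun k => rfl
  have hcoe : ∀ k, ((Lβ k : ↥L) : ℂ) = (ratMap pf qf)^[k] α := by
    intro k
    induction k with
    | zero => rfl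
    | succ k ih =>
      rw [Function.iterate_succ_apply', hLβsucc k]
      have : ((PL.eval (Lβ k) / QL.eval (Lβ k) : ↥L) : ℂ)
          = ((PL.eval (Lβ k) : ↥L) : ℂ) / ((QL.eval (Lβ k) : ↥L) : ℂ) := by
        rw [← IntermediateField.algebraMap_apply, ← IntermediateField.algebraMap_apply,
          ← IntermediateField.algebraMap_apply, map_div₀]
      rw [this, ← hevalP, ← hevalQ, ih]
      rfl
  -- nonvanishing of QL along the orbit
  have hQLne : ∀ k < n, QL.eval (Lβ k) ≠ 0 := by
    intro k hk hzero'
    apply hzero k hk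
    rw [← hcoe k, hevalQ, hzero']
    simp
  -- the scaled polynomials over L
  set PA : Polynomial ↥L := C (A : ↥L) * PL with hPA
  set QA : Polynomial ↥L := C (A : ↥L) * QL with hQA
  have hAL0 : ((A : ℤ) : ↥L) ≠ 0 := Int.cast_ne_zero.mpr hA0
  have hPAdeg : PA.natDegree = pf.natDegree := by rw [hPA, natDegree_C_mul hAL0, hPLdeg]
  have hQAdeg : QA.natDegree = qf.natDegree := by rw [hQA, natDegree_C_mul hAL0, hQLdeg]
  have hdegA : QA.natDegree + 1 < PA.natDegree := by
    rw [hPAdeg, hQAdeg, hpfdeg, hqfdeg]; exact hdeg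
  -- integrality of coefficients of PA, QA
  have hIntTrans : ∀ y : ↥L, IsIntegral ℤ ((y : ↥L) : ℂ) ↔ IsIntegral ℤ y := by
    intro y
    rw [← IntermediateField.algebraMap_apply]
    exact isIntegral_algebraMap_iff hLinj
  have hcast : ∀ (x : ↥L), ((((A : ↥L) * x) : ↥L) : ℂ) = (A : ℂ) * (x : ℂ) := by
    intro x; push_cast; ring
  have hcoeP : ∀ i, ((PL.coeff i : ↥L) : ℂ) = pf.coeff i := by
    intro i; rw [← hPL, Polynomial.coeff_map, ← IntermediateField.algebraMap_apply]
  have hcoeQ : ∀ i, ((QL.coeff i : ↥L) : ℂ) = qf.coeff i := by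
    intro i; rw [← hQL, Polynomial.coeff_map, ← IntermediateField.algebraMap_apply]
  have hPAcoeff : ∀ i, IsIntegral ℤ (PA.coeff i) := by
    intro i
    rw [hPA, coeff_C_mul]
    apply (hIntTrans _).mp
    rw [hcast, hcoeP]
    exact hApf i
  have hQAcoeff : ∀ i, IsIntegral ℤ (QA.coeff i) := by
    intro i
    rw [hQA, coeff_C_mul]
    apply (hIntTrans _).mp
    rw [hcast, hcoeQ]
    exact hAqf i
  set aL : ↥L := PA.leadingCoeff with haL
  have haLcoe : ((aL : ↥L) : ℂ) = aA := by
    rw [haL, Polynomial.leadingCoeff, hPAdeg, hPA, coeff_C_mul, hcast, hcoeP]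
    rw [haA, Polynomial.leadingCoeff]
  have haLint : IsIntegral ℤ aL := (hIntTrans _).mp (by rw [haLcoe]; exact haAint)
  have hvle : ∀ (v : HeightOneSpectrum (𝓞 ↥L)) (y : ↥L), IsIntegral ℤ y →
      v.valuation ↥L y ≤ 1 := by
    intro v y hy
    have h' : algebraMap (𝓞 ↥L) ↥L ⟨y, hy⟩ = y := rfl
    rw [← h']
    exact valuation_le_one v _
  have hβn : IsIntegral ℤ (Lβ n) := (hIntTrans _).mp (by rw [hcoe n]; exact hint)
  have hval : ∀ v : HeightOneSpectrum (𝓞 ↥L), v.valuation ↥L (aL * Lβ j) ≤ 1 := by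
    intro v
    by_contra hbad
    push_neg at hbad
    have hPAval : ∀ i, v.valuation ↥L (PA.coeff i) ≤ 1 := fun i => hvle v _ (hPAcoeff i)
    have hQAval : ∀ i, v.valuation ↥L (QA.coeff i) ≤ 1 := fun i => hvle v _ (hQAcoeff i)
    have grow : ∀ m, j + m ≤ n → 1 < v.valuation ↥L (aL * Lβ (j + m)) := by
      intro m
      induction m with
      | zero => intro _; simpa using hbad
      | succ m ih =>
        intro hm
        have h1 := ih (by omega)
        have hrecA : Lβ (j + m + 1) = PA.eval (Lβ (j+m)) / QA.eval (Lβ (j+m)) := by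
          rw [hLβsucc, hPA, hQA, eval_mul, eval_mul, eval_C,
            mul_div_mul_left _ _ hAL0]
        have hQne : QA.eval (Lβ (j+m)) ≠ 0 := by
          rw [hQA, eval_mul, eval_C]
          exact mul_ne_zero hAL0 (hQLne _ (by omega))
        have hstep := valuation_step v hPAval hQAval hdegA hQne h1
        have : j + (m + 1) = (j + m) + 1 := by omega
        rw [this, hrecA]
        exact lt_trans h1 hstep
    have hend := grow (n - j) (by omega)
    rw [show j + (n - j) = n from by omega] at hend
    have hle : v.valuation ↥L (aL * Lβ n) ≤ 1 := by
      rw [Valuation.map_mul]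
      calc v.valuation ↥L aL * v.valuation ↥L (Lβ n) ≤ 1 * 1 :=
            mul_le_mul' (hvle v _ haLint) (hvle v _ hβn)
        _ = 1 := one_mul 1
    exact absurd hle (not_le.mpr hend)
  obtain ⟨r, hr⟩ := exists_algebraMap_eq_of_forall_valuation_le_one hval
  have hintL : IsIntegral ℤ (aL * Lβ j) := by
    rw [← hr]; exact RingOfIntegers.isIntegral_coe r
  have hintC : IsIntegral ℤ (aA * (ratMap pf qf)^[j] α) := by
    have h2 := (hIntTrans _).mpr hintL
    have h3 : ((aL * Lβ j : ↥L) : ℂ) = aA * (ratMap pf qf)^[j] α := by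
      push_cast
      rw [haLcoe, hcoe]
    rwa [h3] at h2
  have hfin : (D : ℂ) * (ratMap pf qf)^[j] α = e * (aA * (ratMap pf qf)^[j] α) := by
    rw [hDe]; ring
  rw [hfin]
  exact heint.mul hintC
end

section
/- Let k be a number field and h = p/q ∈ k(x) with deg p > deg q + 1. Then there exists a real number T > 0, depending only on h, such that for every real A ≥ 1, every algebraic number α, and every n ≥ 1: if the house of h^n(α) is at most A, then the house of h^j(α) is at most max(T, A) for every j with 0 ≤ j ≤ n − 1. -/
open Polynomial

noncomputable abbrev cabs : AbsoluteValue ℂ ℝ := NormedField.toAbsoluteValue ℂ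

lemma abs_eval_le (P : Polynomial ℂ) {z : ℂ} (hz : 1 ≤ cabs z) :
    cabs (P.eval z) ≤
      (∑ i ∈ Finset.range (P.natDegree + 1), cabs (P.coeff i)) *
        cabs z ^ P.natDegree := by
  rw [eval_eq_sum_range, Finset.sum_mul]
  refine le_trans (AbsoluteValue.sum_le cabs _ _) (Finset.sum_le_sum ?_)
  intro i hi
  rw [map_mul, map_pow]
  have hi' : i ≤ P.natDegree := Nat.lt_succ_iff.mp (Finset.mem_range.mp hi)
  exact mul_le_mul_of_nonneg_left (pow_le_pow_right₀ hz hi') (AbsoluteValue.nonneg _ _)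

lemma abs_eval_ge (P : Polynomial ℂ) {z : ℂ} (hz : 1 ≤ cabs z)
    (hd : 1 ≤ P.natDegree) :
    cabs P.leadingCoeff * cabs z ^ P.natDegree -
        (∑ i ∈ Finset.range P.natDegree, cabs (P.coeff i)) *
          cabs z ^ (P.natDegree - 1) ≤
      cabs (P.eval z) := by
  rw [eval_eq_sum_range, Finset.sum_range_succ]
  have h1 : cabs (P.coeff P.natDegree * z ^ P.natDegree) -
      cabs (∑ i ∈ Finset.range P.natDegree, P.coeff i * z ^ i) ≤
      cabs (∑ i ∈ Finset.range P.natDegree, P.coeff i * z ^ i +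
        P.coeff P.natDegree * z ^ P.natDegree) := by
    set a := P.coeff P.natDegree * z ^ P.natDegree
    set b := ∑ i ∈ Finset.range P.natDegree, P.coeff i * z ^ i
    have h3 : cabs a ≤ cabs (b + a) + cabs b := by
      calc cabs a = cabs (b + a + -b) := by ring_nf
        _ ≤ cabs (b + a) + cabs (-b) := cabs.add_le _ _
        _ = _ := by rw [cabs.map_neg]
    linarith
  refine le_trans ?_ h1
  rw [map_mul, map_pow, coeff_natDegree]
  have h2 : cabs (∑ i ∈ Finset.range P.natDegree, P.coeff i * z ^ i) ≤
      (∑ i ∈ Finset.range P.natDegree, cabs (P.coeff i)) *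
        cabs z ^ (P.natDegree - 1) := by
    rw [Finset.sum_mul]
    refine le_trans (AbsoluteValue.sum_le cabs _ _) (Finset.sum_le_sum ?_)
    intro i hi
    rw [map_mul, map_pow]
    have hi' : i ≤ P.natDegree - 1 := by
      have := Finset.mem_range.mp hi; omega
    exact mul_le_mul_of_nonneg_left (pow_le_pow_right₀ hz hi') (AbsoluteValue.nonneg _ _)
  linarith

/-- The escape threshold for one embedding. -/
noncomputable def Tof {K : Type*} [Field K] (p q : Polynomial K) (τ : K →+* ℂ) : ℝ :=
  max 1 (((∑ i ∈ Finset.range p.natDegree, cabs ((p.map τ).coeff i)) +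
      ∑ i ∈ Finset.range (q.natDegree + 1), cabs ((q.map τ).coeff i)) /
    cabs ((p.map τ).leadingCoeff))

lemma step_bound {K : Type*} [Field K] (p q : Polynomial K)
    (hdeg : q.natDegree + 1 < p.natDegree) (τ : K →+* ℂ) {z : ℂ}
    (hz : Tof p q τ ≤ cabs z) :
    cabs z * cabs ((q.map τ).eval z) ≤ cabs ((p.map τ).eval z) := by
  have hp0 : p ≠ 0 := by
    intro h; rw [h, natDegree_zero] at hdeg; omega
  have hdp : (p.map τ).natDegree = p.natDegree := natDegree_map τ
  have hdq : (q.map τ).natDegree = q.natDegree := natDegree_map τ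
  have hz1 : 1 ≤ cabs z := le_trans (le_max_left _ _) hz
  have hzpos : 0 < cabs z := lt_of_lt_of_le one_pos hz1
  set d := p.natDegree with hd
  set e := q.natDegree with he
  set c := cabs ((p.map τ).leadingCoeff) with hc
  have hcpos : 0 < c := by
    rw [hc]
    apply AbsoluteValue.pos
    rw [leadingCoeff_map]
    exact fun h => hp0 (leadingCoeff_eq_zero.mp (τ.injective (by simpa using h)))
  set Sp := ∑ i ∈ Finset.range d, cabs ((p.map τ).coeff i) with hSp
  set Sq := ∑ i ∈ Finset.range (e + 1), cabs ((q.map τ).coeff i) with hSq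
  have hSqnn : 0 ≤ Sq := Finset.sum_nonneg fun i _ => AbsoluteValue.nonneg _ _
  have hmain : Sp + Sq ≤ c * cabs z := by
    have : (Sp + Sq) / c ≤ cabs z := le_trans (le_max_right _ _) hz
    calc Sp + Sq = ((Sp + Sq) / c) * c := by field_simp
      _ ≤ cabs z * c := mul_le_mul_of_nonneg_right this hcpos.le
      _ = c * cabs z := mul_comm _ _
  have hub : cabs ((q.map τ).eval z) ≤ Sq * cabs z ^ e := by
    have := abs_eval_le (q.map τ) hz1
    rwa [hdq] at this
  have hlb : c * cabs z ^ d - Sp * cabs z ^ (d - 1) ≤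
      cabs ((p.map τ).eval z) := by
    have := abs_eval_ge (p.map τ) hz1 (by rw [hdp]; omega)
    rwa [hdp] at this
  have hp1 : cabs z ^ (e + 1) ≤ cabs z ^ (d - 1) :=
    pow_le_pow_right₀ hz1 (by omega)
  have hpow : c * cabs z ^ d = (c * cabs z) * cabs z ^ (d - 1) := by
    rw [mul_assoc, ← pow_succ']
    congr 2
    omega
  have hpnn : 0 ≤ cabs z ^ (d - 1) := pow_nonneg hzpos.le _
  calc cabs z * cabs ((q.map τ).eval z)
      ≤ cabs z * (Sq * cabs z ^ e) :=
        mul_le_mul_of_nonneg_left hub hzpos.le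
    _ = Sq * cabs z ^ (e + 1) := by ring
    _ ≤ Sq * cabs z ^ (d - 1) := mul_le_mul_of_nonneg_left hp1 hSqnn
    _ ≤ (c * cabs z) * cabs z ^ (d - 1) - Sp * cabs z ^ (d - 1) := by
        nlinarith [mul_le_mul_of_nonneg_right hmain hpnn]
    _ = c * cabs z ^ d - Sp * cabs z ^ (d - 1) := by rw [hpow]
    _ ≤ _ := hlb

lemma le_house {β : ℂ} {γ : ℂ}
    (hγ : γ ∈ (minpoly ℚ β).rootSet ℂ) : cabs γ ≤ house β := by
  have hfin : ((minpoly ℚ β).rootSet ℂ).Finite := (minpoly ℚ β).rootSet_finite ℂ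
  exact le_csSup (Set.Finite.bddAbove (hfin.image _)) (Set.mem_image_of_mem _ hγ)

lemma exists_house {β : ℂ} (hβ : IsAlgebraic ℚ β) :
    ∃ γ ∈ (minpoly ℚ β).rootSet ℂ, cabs γ = house β := by
  have hfin : ((minpoly ℚ β).rootSet ℂ).Finite := (minpoly ℚ β).rootSet_finite ℂ
  have hne : ((minpoly ℚ β).rootSet ℂ).Nonempty := by
    refine ⟨β, ?_⟩
    rw [mem_rootSet]
    exact ⟨minpoly.ne_zero hβ.isIntegral, minpoly.aeval ℚ β⟩
  obtain ⟨γ, hγ, hγ2⟩ := Set.Nonempty.csSup_mem (hne.image cabs) (hfin.image _)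
  exact ⟨γ, hγ, hγ2⟩

section L
variable (L : IntermediateField ℚ ℂ) [Algebra.IsAlgebraic ℚ L]

lemma coe_isAlgebraic (x : L) : IsAlgebraic ℚ (x : ℂ) := by
  have h : IsAlgebraic ℚ x := Algebra.IsAlgebraic.isAlgebraic x
  exact (h.isIntegral.map (IsScalarTower.toAlgHom ℚ L ℂ)).isAlgebraic

omit [Algebra.IsAlgebraic ℚ L] in
lemma minpoly_coe (x : L) : minpoly ℚ (x : ℂ) = minpoly ℚ x :=
  minpoly.algebraMap_eq (algebraMap L ℂ).injective x

lemma sigma_mem_rootSet (x : L) (σ : L →ₐ[ℚ] ℂ) :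
    σ x ∈ (minpoly ℚ (x : ℂ)).rootSet ℂ := by
  rw [minpoly_coe, ← Algebra.IsAlgebraic.range_eval_eq_rootSet_minpoly ℂ x]
  exact ⟨σ, rfl⟩

lemma exists_sigma (x : L) {γ : ℂ} (hγ : γ ∈ (minpoly ℚ (x : ℂ)).rootSet ℂ) :
    ∃ σ : L →ₐ[ℚ] ℂ, σ x = γ := by
  rw [minpoly_coe, ← Algebra.IsAlgebraic.range_eval_eq_rootSet_minpoly ℂ x] at hγ
  exact hγ
end L

/-- Let `h = p/q` over a number field `K` (embedded in `ℂ` via `f`) with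
`deg p > deg q + 1`.  Then there is `T > 0`, depending only on `h`, such that for every
`A ≥ 1`, every algebraic `α` and `n ≥ 1` (all iterates being defined at `α`):
if the house of `hⁿ(α)` is at most `A`, then the house of `hʲ(α)` is at most
`max T A` for `0 ≤ j ≤ n - 1`. -/
theorem house_bound_for_iterates {K : Type*} [Field K] [NumberField K]
    (f : K →+* ℂ) (p q : Polynomial K) (hq : q ≠ 0)
    (hdeg : q.natDegree + 1 < p.natDegree) :
    ∃ T : ℝ, 0 < T ∧
      ∀ A : ℝ, 1 ≤ A → ∀ (α : ℂ), IsAlgebraic ℚ α → ∀ n : ℕ, 1 ≤ n →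
        (∀ j < n, (q.map f).eval ((ratMap (p.map f) (q.map f))^[j] α) ≠ 0) →
        house ((ratMap (p.map f) (q.map f))^[n] α) ≤ A →
        ∀ j < n, house ((ratMap (p.map f) (q.map f))^[j] α) ≤ max T A := by
  classical
  set h := ratMap (p.map f) (q.map f) with hh
  set T := ∑ τ : K →+* ℂ, Tof p q τ with hT
  have hTof1 : ∀ τ : K →+* ℂ, (1 : ℝ) ≤ Tof p q τ := fun τ => le_max_left _ _
  have hTpos : 0 < T := by
    refine Finset.sum_pos (fun τ _ => lt_of_lt_of_le one_pos (hTof1 τ)) ⟨f, Finset.mem_univ f⟩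
  have hTle : ∀ τ : K →+* ℂ, Tof p q τ ≤ T := fun τ =>
    Finset.single_le_sum (f := fun τ => Tof p q τ)
      (fun τ _ => le_trans zero_le_one (hTof1 τ)) (Finset.mem_univ τ)
  refine ⟨T, hTpos, ?_⟩
  intro A hA α hα n hn hne hyp j hjn
  set L := algebraicClosure ℚ ℂ with hL
  haveI : Algebra.IsAlgebraic ℚ L := algebraicClosure.isAlgebraic ℚ ℂ
  have hfc : ∀ c : K, f c ∈ L := by
    intro c
    rw [hL, mem_algebraicClosure_iff]
    have hc : IsAlgebraic ℚ c := Algebra.IsAlgebraic.isAlgebraic c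
    exact (hc.isIntegral.map f.toRatAlgHom).isAlgebraic
  let g : K →+* L :=
    { toFun := fun c => ⟨f c, hfc c⟩
      map_one' := by ext; simp
      map_mul' := fun a b => by ext; simp
      map_zero' := by ext; simp
      map_add' := fun a b => by ext; simp }
  have evalφ : ∀ (φ : L →+* ℂ) (r : Polynomial K) (x : L),
      φ ((r.map g).eval x) = (r.map (φ.comp g)).eval (φ x) := by
    intro φ r x
    have h1 := eval₂_hom (p := r.map g) φ x
    rw [eval₂_map] at h1
    rw [← h1, eval_map]
  have hgcomp : (algebraMap L ℂ).comp g = f := by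
    ext c
    rfl
  have coe_eval : ∀ (r : Polynomial K) (x : L),
      (((r.map g).eval x : L) : ℂ) = (r.map f).eval (x : ℂ) := by
    intro r x
    have h1 := evalφ (algebraMap L ℂ) r x
    rw [hgcomp] at h1
    exact h1
  have mem : ∀ m : ℕ, h^[m] α ∈ L := by
    intro m
    induction m with
    | zero => simpa using mem_algebraicClosure_iff.mpr hα
    | succ m ih =>
      rw [Function.iterate_succ_apply']
      set x : L := ⟨h^[m] α, ih⟩ with hx
      have hval : h (h^[m] α) =
          (((p.map g).eval x / (q.map g).eval x : L) : ℂ) := by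
        rw [show (((p.map g).eval x / (q.map g).eval x : L) : ℂ)
            = (((p.map g).eval x : L) : ℂ) / (((q.map g).eval x : L) : ℂ) from
          map_div₀ (algebraMap L ℂ) _ _]
        rw [coe_eval p x, coe_eval q x]
        rfl
      rw [hval]
      exact SetLike.coe_mem _
  have key : ∀ m, m < n → house (h^[m + 1] α) ≤ max T A →
      house (h^[m] α) ≤ max T A := by
    intro m hm hnext
    by_contra hcon
    push_neg at hcon
    set x : L := ⟨h^[m] α, mem m⟩ with hx
    have hβalg : IsAlgebraic ℚ (h^[m] α) := coe_isAlgebraic L x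
    obtain ⟨γ, hγmem, hγabs⟩ := exists_house hβalg
    obtain ⟨σ, hσ⟩ := exists_sigma L x hγmem
    set τ : K →+* ℂ := (σ : L →+* ℂ).comp g with hτ
    set u := (p.map g).eval x with hu
    set v := (q.map g).eval x with hv
    have hvc : (v : ℂ) = (q.map f).eval (h^[m] α) := coe_eval q x
    have hvne : v ≠ 0 := by
      intro h0
      apply hne m hm
      rw [← hvc, h0]
      simp
    have hyval : h^[m + 1] α = ((u / v : L) : ℂ) := by
      rw [Function.iterate_succ_apply']
      rw [show ((u / v : L) : ℂ) = ((u : L) : ℂ) / ((v : L) : ℂ) from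
        map_div₀ (algebraMap L ℂ) _ _]
      rw [hu, hv, coe_eval p x, coe_eval q x]
      rfl
    have hσu : σ u = (p.map τ).eval γ := by
      have := evalφ (σ : L →+* ℂ) p x
      rw [← hσ]
      exact this
    have hσv : σ v = (q.map τ).eval γ := by
      have := evalφ (σ : L →+* ℂ) q x
      rw [← hσ]
      exact this
    have hσvne : σ v ≠ 0 := by
      intro h0
      exact hvne ((map_eq_zero_iff σ (RingHom.injective (σ : L →+* ℂ))).mp h0)
    have habsσv : 0 < cabs (σ v) := AbsoluteValue.pos _ hσvne
    have hTγ : Tof p q τ ≤ cabs γ := by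
      have h1 := hTle τ
      have h2 : T ≤ max T A := le_max_left _ _
      rw [hγabs]
      linarith
    have hstep := step_bound p q hdeg τ hTγ
    have hγle : cabs γ ≤ cabs (σ (u / v)) := by
      have habs2 : 0 < cabs ((q.map τ).eval γ) := by rw [← hσv]; exact habsσv
      rw [map_div₀, map_div₀, hσu, hσv, le_div_iff₀ habs2]
      exact hstep
    have hconj := sigma_mem_rootSet L (u / v) σ
    have hle2 : cabs (σ (u / v)) ≤ house (((u / v : L) : ℂ)) := le_house hconj
    rw [← hyval] at hle2
    rw [hγabs] at hγle
    linarith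
  have all : ∀ m, m ≤ n → house (h^[n - m] α) ≤ max T A := by
    intro m
    induction m with
    | zero =>
      intro _
      simpa using le_trans hyp (le_max_right T A)
    | succ m ih =>
      intro hm
      have h1 : n - (m + 1) < n := by omega
      have h2 : n - (m + 1) + 1 = n - m := by omega
      refine key _ h1 ?_
      rw [h2]
      exact ih (by omega)
  have := all (n - j) (by omega)
  rwa [show n - (n - j) = j by omega] at this
end
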